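/- Every finite extensive game G with perfect information without relevant ties can be solved by an iterated elimination of weakly dominated strategies: there exists a sequence of games starting from the strategic form Γ(G), each obtained from the previous by eliminating some weakly dominated strategies, ending in a trivial game that contains the unique subgame perfect equilibrium of G. -/

import Mathlib

/-- A finite extensive game with perfect information: a finite rooted tree whose
leaves carry an outcome for each player and whose internal nodes carry the player
to move and a nonempty finite family of children. -/
inductive ExtGame (ι : Type) : Type where
  | leaf : (ι → ℝ) → ExtGame ι
  | node : ι → (m : ℕ) → (Fin (m + 1) → ExtGame ι) → ExtGame ι

namespace ExtGame

variable {ι : Type}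

/-- A strategy of player `i`: at every node where it is `i`'s turn, a choice of a child. -/
def Strategy (i : ι) : ExtGame ι → Type
  | .leaf _ => PUnit
  | .node j m children => (i = j → Fin (m + 1)) × ∀ c : Fin (m + 1), Strategy i (children c)

/-- The outcome (payoff vector) when every player follows his strategy. -/
def outcome : (G : ExtGame ι) → (∀ i, G.Strategy i) → ι → ℝ
  | .leaf o, _ => o
  | .node j _ children, σ =>
      outcome (children ((σ j).1 rfl)) (fun i => (σ i).2 ((σ j).1 rfl))

/-- Nodes of the game tree, identified by the path from the root. -/
inductive Node : ExtGame ι → Type where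
  | root (G : ExtGame ι) : Node G
  | child {j : ι} {m : ℕ} {children : Fin (m + 1) → ExtGame ι}
      (c : Fin (m + 1)) : Node (children c) → Node (.node j m children)

/-- The subgame rooted at a node. -/
def subgameAt : {G : ExtGame ι} → Node G → ExtGame ι
  | _, .root G => G
  | _, .child c v => subgameAt v

/-- The joint strategy of the subgame rooted at `v` induced by a joint strategy. -/
def restrictProfile : {G : ExtGame ι} → (∀ i, G.Strategy i) → (v : Node G) →
    ∀ i, (subgameAt v).Strategy i
  | _, σ, .root _ => σ
  | _, σ, .child c v => restrictProfile (fun i => (σ i).2 c) v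

/-- Nash equilibrium of (the strategic form of) an extensive game. -/
def NashEq [DecidableEq ι] (G : ExtGame ι) (σ : ∀ i, G.Strategy i) : Prop :=
  ∀ (i : ι) (t : G.Strategy i), G.outcome σ i ≥ G.outcome (Function.update σ i t) i

/-- Subgame perfect equilibrium: the induced joint strategy is a Nash equilibrium
in the subgame rooted at every node. -/
def SPE [DecidableEq ι] (G : ExtGame ι) (σ : ∀ i, G.Strategy i) : Prop :=
  ∀ v : Node G, (subgameAt v).NashEq (restrictProfile σ v)

/-- At the root (if it is a non-leaf), the player to move chooses a child whose
subgame outcome (under the induced strategies) is maximal for him. -/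
def BestAtRoot : (G : ExtGame ι) → (∀ i, G.Strategy i) → Prop
  | .leaf _, _ => True
  | .node j _ children, σ =>
      ∀ c, outcome (children ((σ j).1 rfl)) (fun i => (σ i).2 ((σ j).1 rfl)) j ≥
        outcome (children c) (fun i => (σ i).2 c) j

/-- The list of payoff vectors at the leaves of the game tree (one entry per leaf). -/
def leavesList : ExtGame ι → List (ι → ℝ)
  | .leaf o => [o]
  | .node _ _ children => (List.ofFn fun c => leavesList (children c)).flatten

/-- The game is without relevant ties: at every non-leaf node `u` with `turn(u) = i`,
the outcome function of player `i` is injective on the leaves of the subtree rooted at `u`. -/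
def NoRelevantTies : ExtGame ι → Prop
  | .leaf _ => True
  | .node j m children =>
      ((ExtGame.node j m children).leavesList.Pairwise fun o o' => o j ≠ o' j) ∧
      ∀ c, NoRelevantTies (children c)

/-- The player to move at a node (`none` if the node is a leaf). -/
def turnAt {G : ExtGame ι} (v : Node G) : Option ι :=
  match subgameAt v with
  | .leaf _ => none
  | .node j _ _ => some j

end ExtGame


/-- In the strategic form of `G`, `t` weakly dominates `s` (strategies of player `i`) in the
game restricted to the strategy sets `A j`. -/
def WDomIn {n : ℕ} (G : ExtGame (Fin n)) (A : ∀ j, Set (G.Strategy j)) (i : Fin n)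
    (t s : G.Strategy i) : Prop :=
  (∀ σ : ∀ j, G.Strategy j, (∀ j, j ≠ i → σ j ∈ A j) →
      G.outcome (Function.update σ i t) i ≥ G.outcome (Function.update σ i s) i) ∧
  (∃ σ : ∀ j, G.Strategy j, (∀ j, j ≠ i → σ j ∈ A j) ∧
      G.outcome (Function.update σ i t) i > G.outcome (Function.update σ i s) i)

/-- `B` is obtained from `A` by one round of elimination of some (not necessarily all)
strategies that are weakly dominated in the game restricted to `A`. -/
def ElimStep {n : ℕ} (G : ExtGame (Fin n)) (A B : ∀ j, Set (G.Strategy j)) : Prop :=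
  (∀ j, B j ⊆ A j) ∧
  (∀ (j : Fin n), ∀ s ∈ A j, s ∉ B j → ∃ t ∈ A j, WDomIn G A j t s)

set_option linter.unusedVariables false

namespace IEWDS

open ExtGame

variable {ι : Type}

theorem outcome_node {ι : Type} (j : ι) (m : ℕ) (children : Fin (m+1) → ExtGame ι)
    (σ : ∀ i, Strategy i (ExtGame.node j m children)) :
    outcome (.node j m children) σ =
      outcome (children ((σ j).1 rfl)) (fun i => (σ i).2 ((σ j).1 rfl)) := rfl

theorem outcome_mem_leaves : ∀ (G : ExtGame ι) (σ : ∀ i, G.Strategy i),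
    G.outcome σ ∈ G.leavesList
  | .leaf o, _ => by simp [leavesList, outcome]
  | .node j m children, σ => by
      rw [outcome_node]
      have := outcome_mem_leaves (children ((σ j).1 rfl)) (fun i => (σ i).2 ((σ j).1 rfl))
      simp only [leavesList, List.mem_flatten]
      exact ⟨_, List.mem_ofFn.2 ⟨_, rfl⟩, this⟩

theorem update_comp {ι : Type} [DecidableEq ι] {j : ι} {m : ℕ}
    {children : Fin (m+1) → ExtGame ι}
    (σ : ∀ i, Strategy i (ExtGame.node j m children)) (i : ι)
    (t : Strategy i (ExtGame.node j m children)) (c : Fin (m+1)) :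
    (fun i' => ((Function.update σ i t) i').2 c) =
      Function.update (fun i' => (σ i').2 c) i (t.2 c) := by
  funext i'
  rcases eq_or_ne i' i with rfl | hne
  · simp
  · simp [Function.update_of_ne hne]

theorem update_agree {α : Type*} [DecidableEq α] {β : α → Type*}
    {f g : ∀ a, β a} {i : α} (hfg : ∀ a ≠ i, f a = g a) (x : β i) :
    Function.update f i x = Function.update g i x := by
  funext a
  rcases eq_or_ne a i with rfl | hne
  · simp
  · simp [Function.update_of_ne hne, hfg a hne]

/-- Leaves of distinct children have distinct payoffs for the mover, under no relevant ties. -/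
theorem leaves_ne {ι : Type} {j : ι} {m : ℕ} {children : Fin (m+1) → ExtGame ι}
    (hpw : ((ExtGame.node j m children).leavesList.Pairwise fun o o' => o j ≠ o' j))
    {c c' : Fin (m+1)} (hcc : c ≠ c') {x y : ι → ℝ}
    (hx : x ∈ (children c).leavesList) (hy : y ∈ (children c').leavesList) :
    x j ≠ y j := by
  have hpw' := hpw
  rw [leavesList, List.pairwise_flatten] at hpw'
  obtain ⟨h1, h2⟩ := hpw'
  rw [List.pairwise_ofFn] at h2
  rcases lt_or_gt_of_ne hcc with hlt | hlt
  · exact h2 hlt x hx y hy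
  · exact (h2 hlt y hy x hx).symm

end IEWDS

namespace IEWDS
open ExtGame

theorem spe_exists {ι : Type} [DecidableEq ι] : ∀ (G : ExtGame ι), ∃ σ, G.SPE σ
  | .leaf o => by
      refine ⟨fun _ => PUnit.unit, ?_⟩
      intro v
      cases v with
      | root => intro i t; exact le_refl _
  | .node j m children => by
      have ih : ∀ c, ∃ σ, (children c).SPE σ := fun c => spe_exists (children c)
      choose σs hσs using ih
      obtain ⟨cs, hcs⟩ := Finite.exists_max fun c => (children c).outcome (σs c) j
      refine ⟨fun i => ⟨fun _ => cs, fun c => σs c i⟩, ?_⟩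
      intro v
      cases v with
      | child c v => exact hσs c v
      | root =>
        intro i t
        set σ : ∀ i, Strategy i (ExtGame.node j m children) :=
          (fun i => ⟨fun _ => cs, fun c => σs c i⟩) with hσ
        by_cases hij : i = j
        · subst hij
          have e1 : Function.update σ i t i = t := Function.update_self ..
          show outcome (ExtGame.node i m children) σ i ≥
            outcome (ExtGame.node i m children) (Function.update σ i t) i
          rw [outcome_node, outcome_node, e1, update_comp σ i t (t.1 rfl)]
          have h2 : Function.update (fun i' => (σ i').2 (t.1 rfl)) i (t.2 (t.1 rfl)) =
              Function.update (σs (t.1 rfl)) i (t.2 (t.1 rfl)) := rfl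
          rw [h2]
          calc outcome (children (t.1 rfl)) (Function.update (σs (t.1 rfl)) i (t.2 (t.1 rfl))) i
              ≤ outcome (children (t.1 rfl)) (σs (t.1 rfl)) i := hσs (t.1 rfl) (.root _) i _
            _ ≤ outcome (children cs) (σs cs) i := hcs _
            _ = outcome (children ((σ i).1 rfl)) (fun i' => (σ i').2 ((σ i).1 rfl)) i := rfl
        · have e1 : Function.update σ i t j = σ j := Function.update_of_ne (Ne.symm hij) ..
          show outcome (ExtGame.node j m children) σ i ≥
            outcome (ExtGame.node j m children) (Function.update σ i t) i
          rw [outcome_node, outcome_node, e1, update_comp σ i t ((σ j).1 rfl)]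
          have h2 : Function.update (fun i' => (σ i').2 ((σ j).1 rfl)) i (t.2 ((σ j).1 rfl)) =
              Function.update (σs ((σ j).1 rfl)) i (t.2 ((σ j).1 rfl)) := rfl
          rw [h2]
          exact hσs ((σ j).1 rfl) (.root _) i _

end IEWDS

namespace IEWDS
open ExtGame

theorem outcome_update_self {ι : Type} [DecidableEq ι] {j : ι} {mm : ℕ}
    {children : Fin (mm+1) → ExtGame ι}
    (σ : ∀ i, Strategy i (ExtGame.node j mm children))
    (t : Strategy j (ExtGame.node j mm children)) :
    outcome (ExtGame.node j mm children) (Function.update σ j t) =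
      outcome (children (t.1 rfl))
        (Function.update (fun i' => (σ i').2 (t.1 rfl)) j (t.2 (t.1 rfl))) := by
  have e1 : Function.update σ j t j = t := Function.update_self ..
  rw [outcome_node, e1, update_comp σ j t (t.1 rfl)]

theorem outcome_update_other {ι : Type} [DecidableEq ι] {j : ι} {mm : ℕ}
    {children : Fin (mm+1) → ExtGame ι}
    (σ : ∀ i, Strategy i (ExtGame.node j mm children)) {i : ι} (hij : i ≠ j)
    (t : Strategy i (ExtGame.node j mm children)) :
    outcome (ExtGame.node j mm children) (Function.update σ i t) =
      outcome (children ((σ j).1 rfl))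
        (Function.update (fun i' => (σ i').2 ((σ j).1 rfl)) i (t.2 ((σ j).1 rfl))) := by
  have e1 : Function.update σ i t j = σ j := Function.update_of_ne (Ne.symm hij) ..
  rw [outcome_node, e1, update_comp σ i t ((σ j).1 rfl)]

end IEWDS

namespace IEWDS
open ExtGame

theorem main {n : ℕ} : ∀ (G : ExtGame (Fin n)), G.NoRelevantTies →
    ∃ (A : ℕ → ∀ j, Set (G.Strategy j)) (k : ℕ),
      (A 0 = fun _ => Set.univ) ∧
      (∀ m < k, ElimStep G (A m) (A (m + 1))) ∧
      (∀ σ τ : ∀ j, G.Strategy j, (∀ j, σ j ∈ A k j) → (∀ j, τ j ∈ A k j) →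
        ∀ i : Fin n, G.outcome σ i = G.outcome τ i) ∧
      (∀ σ : ∀ j, G.Strategy j, G.SPE σ → ∀ j, σ j ∈ A k j)
  | .leaf o, _ => by
      refine ⟨fun _ _ => Set.univ, 0, rfl, by omega, fun σ τ _ _ i => rfl,
        fun σ _ j => Set.mem_univ _⟩
  | .node j mm children, h => by
      obtain ⟨hpw, hch⟩ : _ ∧ _ := h
      have ih := fun c => main (children c) (hch c)
      choose Ac kc h0 hstep htriv hspe using ih
      -- monotonicity of the subgame elimination sequences
      have hmono : ∀ c (i : Fin n) (a b : ℕ), a ≤ b → b ≤ kc c →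
          Ac c b i ⊆ Ac c a i := by
        intro c i a b hab
        induction hab with
        | refl => intro _; exact fun _ h => h
        | @step b hb ihb =>
            intro hbk
            exact fun s hs => ihb (Nat.le_of_succ_le hbk)
              ((hstep c b (Nat.lt_of_succ_le hbk)).1 i hs)
      -- the capped sequences satisfy elimination steps at every stage
      have hstepAll : ∀ c (m' : ℕ), ElimStep (children c)
          (fun i => Ac c (min m' (kc c)) i) (fun i => Ac c (min (m'+1) (kc c)) i) := by
        intro c m'
        rcases lt_or_ge m' (kc c) with hm | hm
        · rw [min_eq_left hm.le, min_eq_left (Nat.succ_le_of_lt hm)]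
          exact hstep c m' hm
        · rw [min_eq_right hm, min_eq_right (le_trans hm (Nat.le_succ _))]
          exact ⟨fun _ _ h => h, fun i s hs hns => absurd hs hns⟩
      -- SPE of the subgames
      have hσs := fun c => (spe_exists (children c)).choose_spec
      set σs : ∀ c, ∀ i, (children c).Strategy i :=
        fun c => (spe_exists (children c)).choose with hσsdef
      have hσin : ∀ c (i : Fin n) (m' : ℕ), σs c i ∈ Ac c (min m' (kc c)) i :=
        fun c i m' => hmono c i _ _ (min_le_right _ _) le_rfl (hspe c (σs c) (hσs c) i)
      set K := Finset.univ.sup kc with hKdef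
      have hK : ∀ c, kc c ≤ K := fun c => Finset.le_sup (Finset.mem_univ c)
      have hfin : ∀ (M : ℕ) c, K ≤ M → min M (kc c) = kc c :=
        fun M c hM => min_eq_right (le_trans (hK c) hM)
      set w : Fin (mm+1) → Fin n → ℝ := fun c => (children c).outcome (σs c) with hwdef
      obtain ⟨cs, hcs⟩ := Finite.exists_max fun c => w c j
      have hlt : ∀ c, c ≠ cs → w c j < w cs j := fun c hc =>
        lt_of_le_of_ne (hcs c)
          (leaves_ne hpw hc (outcome_mem_leaves _ _) (outcome_mem_leaves _ _))
      -- outcome is the subgame SPE outcome once all relevant components are in the final sets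
      have hout : ∀ (σ : ∀ i, Strategy i (ExtGame.node j mm children)) (c : Fin (mm+1)),
          (σ j).1 rfl = c → (∀ i, (σ i).2 c ∈ Ac c (kc c) i) →
          ∀ i, outcome (ExtGame.node j mm children) σ i = w c i := by
        intro σ c hc hin i
        subst hc
        exact htriv _ _ (σs _) hin (fun i' => hspe _ _ (hσs _) i') i
      -- the elimination sequence for the whole game
      refine ⟨fun m' i =>
        { s | (∀ hij : i = j, s.2 (s.1 hij) ∈ Ac (s.1 hij) (min m' (kc (s.1 hij))) i ∧
                (K < m' → s.1 hij = cs)) ∧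
              (i ≠ j → ∀ c, s.2 c ∈ Ac c (min m' (kc c)) i) }, K + 1, ?_, ?_, ?_, ?_⟩
      · -- A 0 = univ
        funext i
        refine Set.eq_univ_of_forall fun s => ⟨fun hij => ⟨?_, fun hc => absurd hc (by omega)⟩,
          fun _ c => ?_⟩
        · rw [Nat.zero_min, h0]; exact Set.mem_univ _
        · rw [Nat.zero_min, h0]; exact Set.mem_univ _
      · -- elimination steps
        intro m' hm'
        have hm'K : m' ≤ K := Nat.lt_succ_iff.mp hm'
        constructor
        · -- one-step inclusion
          intro i s hs
          obtain ⟨h1, h2⟩ := hs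
          exact ⟨fun hij => ⟨(hstepAll _ m').1 i (h1 hij).1,
              fun hc => (h1 hij).2 (Nat.lt_succ_of_lt hc)⟩,
            fun hni c => (hstepAll c m').1 i (h2 hni c)⟩
        · -- eliminated strategies are weakly dominated
          intro i s hs hns
          by_cases hij : i = j
          · subst hij
            obtain ⟨h1, -⟩ := hs
            obtain ⟨hmem, hpin⟩ := h1 rfl
            by_cases hX : s.2 (s.1 rfl) ∈ Ac (s.1 rfl) (min (m'+1) (kc (s.1 rfl))) i
            · -- the component at the chosen child survives: the choice itself is eliminated
              have hY : s.1 rfl ≠ cs := by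
                intro hY
                exact hns ⟨fun hij => ⟨hX, fun _ => hY⟩, fun hni => absurd rfl hni⟩
              have hmK : K ≤ m' := by
                by_contra hmK
                exact hns ⟨fun hij => ⟨hX, fun hc => absurd hc (by omega)⟩,
                  fun hni => absurd rfl hni⟩
              have hfin' : ∀ c, min m' (kc c) = kc c := fun c => hfin m' c hmK
              set t : Strategy i (ExtGame.node i mm children) :=
                ⟨fun _ => cs, Function.update s.2 cs (σs cs i)⟩ with htdef
              have ht1 : t.1 rfl = cs := rfl
              have ht2 : t.2 cs = σs cs i := Function.update_self ..
              have hgt : ∀ σ : ∀ i', Strategy i' (ExtGame.node i mm children),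
                  (∀ i', i' ≠ i → σ i' ∈ { s : Strategy i' (ExtGame.node i mm children) |
                    (∀ hij : i' = i, s.2 (s.1 hij) ∈ Ac (s.1 hij) (min m' (kc (s.1 hij))) i' ∧
                      (K < m' → s.1 hij = cs)) ∧
                    (i' ≠ i → ∀ c, s.2 c ∈ Ac c (min m' (kc c)) i') }) →
                  outcome (ExtGame.node i mm children) (Function.update σ i t) i >
                    outcome (ExtGame.node i mm children) (Function.update σ i s) i := by
                intro σ hσc
                rw [outcome_update_self σ t, outcome_update_self σ s]
                have hT : outcome (children (t.1 rfl))
                    (Function.update (fun i' => (σ i').2 (t.1 rfl)) i (t.2 (t.1 rfl))) i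
                    = w cs i := by
                  rw [ht1, ht2]
                  refine htriv cs _ (σs cs) (fun i' => ?_) (fun i' => hspe _ _ (hσs _) i') i
                  rcases eq_or_ne i' i with rfl | hne'
                  · rw [Function.update_self]; exact hspe _ _ (hσs _) i'
                  · rw [Function.update_of_ne hne']
                    have h3 := (hσc i' hne').2 hne' cs
                    rw [hfin' cs] at h3
                    exact h3
                have hS : outcome (children (s.1 rfl))
                    (Function.update (fun i' => (σ i').2 (s.1 rfl)) i (s.2 (s.1 rfl))) i
                    = w (s.1 rfl) i := by
                  refine htriv _ _ (σs _) (fun i' => ?_) (fun i' => hspe _ _ (hσs _) i') i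
                  rcases eq_or_ne i' i with rfl | hne'
                  · rw [Function.update_self]
                    have h3 := hmem; rw [hfin'] at h3; exact h3
                  · rw [Function.update_of_ne hne']
                    have h3 := (hσc i' hne').2 hne' (s.1 rfl)
                    rw [hfin'] at h3
                    exact h3
                rw [hT, hS]
                exact hlt _ hY
              refine ⟨t, ⟨fun hij => ⟨?_, fun _ => rfl⟩, fun hni => absurd rfl hni⟩,
                fun σ hσc => le_of_lt (hgt σ hσc), ?_⟩
              · show t.2 cs ∈ Ac cs (min m' (kc cs)) i
                rw [ht2]; exact hσin cs i m'
              · refine ⟨fun i' => ⟨fun _ => cs, fun c => σs c i'⟩, fun i' hne' => ?_, ?_⟩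
                · exact ⟨fun hij => absurd hij hne', fun _ c => hσin c i' m'⟩
                · exact hgt _ (fun i' hne' =>
                    ⟨fun hij => absurd hij hne', fun _ c => hσin c i' m'⟩)
            · -- the component at the chosen child is eliminated in the subgame
              obtain ⟨t₀, ht₀, hdom⟩ := (hstepAll (s.1 rfl) m').2 i _ hmem hX
              set t : Strategy i (ExtGame.node i mm children) :=
                ⟨s.1, Function.update s.2 (s.1 rfl) t₀⟩ with htdef
              have ht1 : t.1 rfl = s.1 rfl := rfl
              have ht2 : t.2 (s.1 rfl) = t₀ := Function.update_self ..
              have keyT : ∀ σ : ∀ i', Strategy i' (ExtGame.node i mm children),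
                  outcome (ExtGame.node i mm children) (Function.update σ i t) i =
                    outcome (children (s.1 rfl))
                      (Function.update (fun i' => (σ i').2 (s.1 rfl)) i t₀) i := by
                intro σ
                rw [outcome_update_self σ t]
                show outcome (children (s.1 rfl))
                  (Function.update (fun i' => (σ i').2 (s.1 rfl)) i (t.2 (s.1 rfl))) i = _
                rw [ht2]
              have keyS : ∀ σ : ∀ i', Strategy i' (ExtGame.node i mm children),
                  outcome (ExtGame.node i mm children) (Function.update σ i s) i =
                    outcome (children (s.1 rfl))
                      (Function.update (fun i' => (σ i').2 (s.1 rfl)) i (s.2 (s.1 rfl))) i := by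
                intro σ
                rw [outcome_update_self σ s]
              refine ⟨t, ⟨fun hij => ⟨?_, hpin⟩, fun hni => absurd rfl hni⟩, ?_, ?_⟩
              · show t.2 (s.1 rfl) ∈ Ac (s.1 rfl) (min m' (kc (s.1 rfl))) i
                rw [ht2]; exact ht₀
              · intro σ hσc
                rw [ge_iff_le, keyT σ, keyS σ]
                refine hdom.1 _ (fun i' hne' => ?_)
                exact (hσc i' hne').2 hne' (s.1 rfl)
              · obtain ⟨τ, hτc, hτgt⟩ := hdom.2
                set σbar : ∀ i', Strategy i' (ExtGame.node i mm children) :=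
                  fun i' => ⟨fun _ => s.1 rfl,
                    Function.update (fun c => σs c i') (s.1 rfl) (τ i')⟩ with hσbar
                have hbase : (fun i' => (σbar i').2 (s.1 rfl)) = τ := by
                  funext i'
                  show Function.update (fun c => σs c i') (s.1 rfl) (τ i') (s.1 rfl) = τ i'
                  exact Function.update_self ..
                refine ⟨σbar, fun i' hne' => ⟨fun hij => absurd hij hne', fun _ c => ?_⟩, ?_⟩
                · rcases eq_or_ne c (s.1 rfl) with rfl | hc
                  · show Function.update (fun c' => σs c' i') (s.1 rfl) (τ i') (s.1 rfl) ∈ _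
                    rw [Function.update_self]; exact hτc i' hne'
                  · show Function.update (fun c' => σs c' i') (s.1 rfl) (τ i') c ∈ _
                    rw [Function.update_of_ne hc]; exact hσin c i' m'
                · rw [gt_iff_lt, keyS σbar, keyT σbar, hbase]
                  exact hτgt
          · -- the eliminated strategy belongs to a player not moving at the root
            have hsc := hs.2 hij
            have hex : ∃ c, s.2 c ∉ Ac c (min (m'+1) (kc c)) i := by
              by_contra hall
              push_neg at hall
              exact hns ⟨fun hij' => absurd hij' hij, fun _ c => hall c⟩
            obtain ⟨c₀, hc₀⟩ := hex
            obtain ⟨t₀, ht₀, hdom⟩ := (hstepAll c₀ m').2 i _ (hsc c₀) hc₀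
            set t : Strategy i (ExtGame.node j mm children) :=
              ⟨s.1, Function.update s.2 c₀ t₀⟩ with htdef
            have ht2 : t.2 c₀ = t₀ := Function.update_self ..
            have ht2' : ∀ c, c ≠ c₀ → t.2 c = s.2 c := fun c hc => Function.update_of_ne hc ..
            have key : ∀ (σ : ∀ i', Strategy i' (ExtGame.node j mm children))
                (x : Strategy i (ExtGame.node j mm children)),
                outcome (ExtGame.node j mm children) (Function.update σ i x) i =
                  outcome (children ((σ j).1 rfl))
                    (Function.update (fun i' => (σ i').2 ((σ j).1 rfl)) i
                      (x.2 ((σ j).1 rfl))) i :=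
              fun σ x => by rw [outcome_update_other σ hij x]
            refine ⟨t, ⟨fun hij' => absurd hij' hij, fun _ c => ?_⟩, ?_, ?_⟩
            · rcases eq_or_ne c c₀ with rfl | hc
              · rw [ht2]; exact ht₀
              · rw [ht2' c hc]; exact hsc c
            · -- weak inequality against every profile
              intro σ hσc
              rw [ge_iff_le, key σ s, key σ t]
              rcases eq_or_ne ((σ j).1 rfl) c₀ with he | he
              · rw [he, ht2]
                refine hdom.1 _ (fun i' hne' => ?_)
                by_cases hij' : i' = j
                · subst hij'
                  have h3 := ((hσc i' hne').1 rfl).1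
                  rw [he] at h3
                  exact h3
                · exact (hσc i' hne').2 hij' c₀
              · rw [ht2' _ he]
            · -- strict inequality against some profile
              obtain ⟨τ, hτc, hτgt⟩ := hdom.2
              set σbar : ∀ i', Strategy i' (ExtGame.node j mm children) :=
                fun i' => ⟨fun _ => c₀,
                  Function.update (fun c => σs c i') c₀ (τ i')⟩ with hσbar
              have hbase : (fun i' => (σbar i').2 c₀) = τ := by
                funext i'
                show Function.update (fun c => σs c i') c₀ (τ i') c₀ = τ i'
                exact Function.update_self ..
              refine ⟨σbar, fun i' hne' => ⟨fun hij' => ⟨?_, fun hc => absurd hc (by omega)⟩,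
                fun _ c => ?_⟩, ?_⟩
              · show Function.update (fun c => σs c i') c₀ (τ i') c₀ ∈ _
                rw [Function.update_self]; exact hτc i' hne'
              · rcases eq_or_ne c c₀ with heq | hc
                · subst heq
                  show Function.update (fun c' => σs c' i') c (τ i') c ∈ _
                  rw [Function.update_self]; exact hτc i' hne'
                · show Function.update (fun c' => σs c' i') c₀ (τ i') c ∈ _
                  rw [Function.update_of_ne hc]; exact hσin c i' m'
              · rw [gt_iff_lt, key σbar s, key σbar t]
                show outcome (children c₀)
                    (Function.update (fun i' => (σbar i').2 c₀) i (s.2 c₀)) i <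
                  outcome (children c₀)
                    (Function.update (fun i' => (σbar i').2 c₀) i (t.2 c₀)) i
                rw [ht2, hbase]
                exact hτgt
      · -- triviality at K+1
        have hcomp : ∀ (σ : ∀ i, Strategy i (ExtGame.node j mm children)),
            (∀ i, σ i ∈ { s : Strategy i (ExtGame.node j mm children) |
              (∀ hij : i = j, s.2 (s.1 hij) ∈ Ac (s.1 hij) (min (K+1) (kc (s.1 hij))) i ∧
                (K < K+1 → s.1 hij = cs)) ∧
              (i ≠ j → ∀ c, s.2 c ∈ Ac c (min (K+1) (kc c)) i) }) →
            ((σ j).1 rfl = cs ∧ ∀ i, (σ i).2 cs ∈ Ac cs (kc cs) i) := by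
          intro σ hσ
          have hcσ : (σ j).1 rfl = cs := ((hσ j).1 rfl).2 (Nat.lt_succ_self _)
          refine ⟨hcσ, fun i => ?_⟩
          by_cases hij : i = j
          · subst hij
            have h1 := ((hσ i).1 rfl).1
            rw [hcσ, hfin (K+1) cs (Nat.le_succ _)] at h1
            exact h1
          · have h1 := (hσ i).2 hij cs
            rw [hfin (K+1) cs (Nat.le_succ _)] at h1
            exact h1
        intro σ τ hσ hτ i
        obtain ⟨hcσ, hmσ⟩ := hcomp σ hσ
        obtain ⟨hcτ, hmτ⟩ := hcomp τ hτ
        rw [hout σ cs hcσ hmσ i, hout τ cs hcτ hmτ i]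
      · -- SPE containment
        intro σ hσ i
        have hchild : ∀ c (i' : Fin n), (σ i').2 c ∈ Ac c (kc c) i' :=
          fun c i' => hspe c _ (fun v => hσ (.child c v)) i'
        by_cases hij : i = j
        · subst hij
          -- the root choice must be cs
          have hroot := hσ (.root _)
          set t : Strategy i (ExtGame.node i mm children) :=
            ⟨fun _ => cs, fun c => σs c i⟩ with htdef
          have hne : outcome (ExtGame.node i mm children) σ i ≥
              outcome (ExtGame.node i mm children) (Function.update σ i t) i := hroot i t
          have e1 : Function.update σ i t i = t := Function.update_self ..
          rw [outcome_node, outcome_node, e1] at hne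
          have hupd : (fun i' => ((Function.update σ i t) i').2 (t.1 rfl)) =
              Function.update (fun i' => (σ i').2 (t.1 rfl)) i (t.2 (t.1 rfl)) :=
            update_comp σ i t (t.1 rfl)
          rw [hupd] at hne
          -- RHS equals w cs i
          have hrhs : outcome (children (t.1 rfl))
              (Function.update (fun i' => (σ i').2 (t.1 rfl)) i (t.2 (t.1 rfl))) i = w cs i := by
            show outcome (children cs)
              (Function.update (fun i' => (σ i').2 cs) i (σs cs i)) i = w cs i
            refine htriv cs _ (σs cs) (fun i' => ?_) (fun i' => hspe _ _ (hσs _) i') i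
            rcases eq_or_ne i' i with rfl | hne'
            · rw [Function.update_self]; exact hspe _ _ (hσs _) i'
            · rw [Function.update_of_ne hne']; exact hchild cs i'
          have hlhs : outcome (children ((σ i).1 rfl)) (fun i' => (σ i').2 ((σ i).1 rfl)) i
              = w ((σ i).1 rfl) i :=
            htriv _ _ (σs _) (fun i' => hchild _ i') (fun i' => hspe _ _ (hσs _) i') i
          rw [hrhs, hlhs] at hne
          have hcc : (σ i).1 rfl = cs := by
            by_contra hcc
            exact absurd hne (not_le.2 (hlt _ hcc))
          refine ⟨fun hij => ⟨?_, fun _ => hcc⟩, fun hni => absurd rfl hni⟩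
          have h1 := hchild ((σ i).1 rfl) i
          rw [← hfin (K+1) ((σ i).1 rfl) (Nat.le_succ _)] at h1
          exact h1
        · refine ⟨fun hij' => absurd hij' hij, fun _ c => ?_⟩
          have h1 := hchild c i
          rw [← hfin (K+1) c (Nat.le_succ _)] at h1
          exact h1

end IEWDS

/-- Every finite extensive game with perfect information without relevant ties can be solved
by an iterated elimination of weakly dominated strategies: starting from the strategic form
of `G`, there is a sequence of elimination rounds ending (after `k` steps) in a trivial game
that contains the (unique) subgame perfect equilibrium of `G`. -/
theorem solvable_by_iewds {n : ℕ} (G : ExtGame (Fin n)) (h : G.NoRelevantTies) :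
    ∃ (A : ℕ → ∀ j, Set (G.Strategy j)) (k : ℕ),
      (A 0 = fun _ => Set.univ) ∧
      (∀ m < k, ElimStep G (A m) (A (m + 1))) ∧
      (∀ σ τ : ∀ j, G.Strategy j, (∀ j, σ j ∈ A k j) → (∀ j, τ j ∈ A k j) →
        ∀ i : Fin n, G.outcome σ i = G.outcome τ i) ∧
      (∀ σ : ∀ j, G.Strategy j, G.SPE σ → ∀ j, σ j ∈ A k j) := IEWDS.main G h
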